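/- The Darboux-Halphen system t1'+t2' = t1 t2, t2'+t3' = t2 t3, t1'+t3' = t1 t3 is invariant under the change of variables w = (az+b)/(a'z+b'), t_i(z) = -2a'/(a'z+b') + (ab'-ba')/(a'z+b')^2 · s_i(w): if s1, s2, s3 satisfy the system in the variable w (with ab' - ba' ≠ 0 and a'z+b' ≠ 0), then t1, t2, t3 satisfy the same system in the variable z. -/

import Mathlib

set_option maxHeartbeats 1000000

lemma dh_alg (D C A S1 S2 S1' S2' : ℂ) (hD : D ≠ 0) (h : S1' + S2' = S1 * S2) :
    (2 * A ^ 2 / D ^ 2 - 2 * A * C / D ^ 3 * S1 + C ^ 2 / D ^ 4 * S1') +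
      (2 * A ^ 2 / D ^ 2 - 2 * A * C / D ^ 3 * S2 + C ^ 2 / D ^ 4 * S2') =
    (-2 * A / D + C / D ^ 2 * S1) * (-2 * A / D + C / D ^ 2 * S2) := by
  have h4 : (D : ℂ) ^ 4 ≠ 0 := pow_ne_zero _ hD
  field_simp
  linear_combination C ^ 2 * h

lemma dh_deriv (a b a' b' : ℂ) (s : ℂ → ℂ) (hs : Differentiable ℂ s)
    (z : ℂ) (hz : a' * z + b' ≠ 0) :
    deriv (fun z => -2 * a' / (a' * z + b') +
      ((a * b' - b * a') / (a' * z + b') ^ 2) * s ((a * z + b) / (a' * z + b'))) z =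
    2 * a' ^ 2 / (a' * z + b') ^ 2
      - 2 * a' * (a * b' - b * a') / (a' * z + b') ^ 3 * s ((a * z + b) / (a' * z + b'))
      + ((a * b' - b * a') ^ 2 / (a' * z + b') ^ 4) *
          deriv s ((a * z + b) / (a' * z + b')) := by
  have hD : HasDerivAt (fun z : ℂ => a' * z + b') a' z := by
    simpa using ((hasDerivAt_id z).const_mul a').add_const b'
  have hN : HasDerivAt (fun z : ℂ => a * z + b) a z := by
    simpa using ((hasDerivAt_id z).const_mul a).add_const b
  have hw : HasDerivAt (fun z : ℂ => (a * z + b) / (a' * z + b'))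
      ((a * (a' * z + b') - (a * z + b) * a') / (a' * z + b') ^ 2) z := hN.div hD hz
  have hcomp : HasDerivAt (fun z : ℂ => s ((a * z + b) / (a' * z + b')))
      (deriv s ((a * z + b) / (a' * z + b')) *
        ((a * (a' * z + b') - (a * z + b) * a') / (a' * z + b') ^ 2)) z :=
    ((hs _).hasDerivAt).comp z hw
  have h1 : HasDerivAt (fun z : ℂ => -2 * a' / (a' * z + b'))
      ((0 * (a' * z + b') - (-2 * a') * a') / (a' * z + b') ^ 2) z :=
    (hasDerivAt_const z (-2 * a')).div hD hz
  have hD2 : HasDerivAt (fun z : ℂ => (a' * z + b') ^ 2)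
      (2 * (a' * z + b') ^ 1 * a') z := by
    simpa using hD.fun_pow 2
  have h2 : HasDerivAt (fun z : ℂ => (a * b' - b * a') / (a' * z + b') ^ 2)
      ((0 * (a' * z + b') ^ 2 - (a * b' - b * a') * (2 * (a' * z + b') ^ 1 * a')) /
        ((a' * z + b') ^ 2) ^ 2) z :=
    (hasDerivAt_const z (a * b' - b * a')).div hD2 (pow_ne_zero 2 hz)
  rw [(h1.fun_add (h2.fun_mul hcomp)).deriv]
  rw [show a * (a' * z + b') - (a * z + b) * a' = a * b' - b * a' from by ring]
  generalize s ((a * z + b) / (a' * z + b')) = S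
  generalize deriv s ((a * z + b) / (a' * z + b')) = S'
  generalize hDz : a' * z + b' = D at hz ⊢
  field_simp
  ring

/-- Invariance of the Darboux-Halphen system under the Möbius-type change of
variables `w = (az+b)/(a'z+b')`,
`tᵢ(z) = -2a'/(a'z+b') + ((ab'-ba')/(a'z+b')²)·sᵢ(w)`. -/
theorem darboux_halphen_invariance
    (a b a' b' : ℂ) (hab : a * b' - b * a' ≠ 0)
    (s1 s2 s3 : ℂ → ℂ)
    (hs1 : Differentiable ℂ s1) (hs2 : Differentiable ℂ s2)
    (hs3 : Differentiable ℂ s3)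
    (hsys1 : ∀ w, deriv s1 w + deriv s2 w = s1 w * s2 w)
    (hsys2 : ∀ w, deriv s2 w + deriv s3 w = s2 w * s3 w)
    (hsys3 : ∀ w, deriv s1 w + deriv s3 w = s1 w * s3 w)
    (w : ℂ → ℂ) (hw : w = fun z => (a * z + b) / (a' * z + b'))
    (t1 t2 t3 : ℂ → ℂ)
    (ht1 : t1 = fun z => -2 * a' / (a' * z + b') +
      ((a * b' - b * a') / (a' * z + b') ^ 2) * s1 (w z))
    (ht2 : t2 = fun z => -2 * a' / (a' * z + b') +
      ((a * b' - b * a') / (a' * z + b') ^ 2) * s2 (w z))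
    (ht3 : t3 = fun z => -2 * a' / (a' * z + b') +
      ((a * b' - b * a') / (a' * z + b') ^ 2) * s3 (w z)) :
    ∀ z : ℂ, a' * z + b' ≠ 0 →
      deriv t1 z + deriv t2 z = t1 z * t2 z ∧
      deriv t2 z + deriv t3 z = t2 z * t3 z ∧
      deriv t1 z + deriv t3 z = t1 z * t3 z := by
  intro z hz
  subst hw ht1 ht2 ht3
  beta_reduce
  rw [dh_deriv a b a' b' s1 hs1 z hz, dh_deriv a b a' b' s2 hs2 z hz,
    dh_deriv a b a' b' s3 hs3 z hz]
  exact ⟨dh_alg _ _ _ _ _ _ _ hz (hsys1 _),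
    dh_alg _ _ _ _ _ _ _ hz (hsys2 _),
    dh_alg _ _ _ _ _ _ _ hz (hsys3 _)⟩
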